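/- Let g, h : V → ℤ satisfy g(i)·h(i) ≥ 0 for all i ∈ V and g(i)·h(j) ≤ 0 for all i ≠ j in V. Then z^{γᵀg} * z^{γᵀh} = z^{γᵀ(g+h)} in A. (Consequently, for the ℤE-grading of the Weyl algebra, the product of the homogeneous components of degrees γᵀg and γᵀh equals the homogeneous component of degree γᵀ(g+h).) -/

import Mathlib

set_option linter.unusedSectionVars false

open MvPolynomial

variable {K : Type*} [Field K] {E : Type*} [Fintype E] [DecidableEq E]

noncomputable def Wx (K : Type*) [Field K] {E : Type*} (e : E) :
    Module.End K (MvPolynomial E K) :=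
  LinearMap.mulLeft K (X e)

noncomputable def Wy (K : Type*) [Field K] {E : Type*} (e : E) :
    Module.End K (MvPolynomial E K) :=
  (pderiv e).toLinearMap

noncomputable def Wu (K : Type*) [Field K] {E : Type*} (e : E) :
    Module.End K (MvPolynomial E K) :=
  Wy K e * Wx K e

lemma pderiv_pderiv_comm (a b : E) (p : MvPolynomial E K) :
    pderiv a (pderiv b p) = pderiv b (pderiv a p) := by
  induction p using MvPolynomial.induction_on with
  | C c => simp
  | add p q hp hq => simp [hp, hq]
  | mul_X p i hp =>
      by_cases hai : a = i
      · subst hai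
        by_cases hbi : b = a
        · subst hbi; rfl
        · simp [pderiv_mul, pderiv_X_of_ne (Ne.symm hbi), hp]; ring
      · by_cases hbi : b = i
        · subst hbi
          simp [pderiv_mul, pderiv_X_of_ne (Ne.symm hai), hp]; ring
        · simp [pderiv_mul, pderiv_X_of_ne (Ne.symm hai), pderiv_X_of_ne (Ne.symm hbi), hp]

lemma commute_Wx_Wx (a b : E) : Commute (Wx K a) (Wx K b) := by
  show _ = _
  apply LinearMap.ext; intro p
  simp [Wx, Module.End.mul_apply, mul_left_comm]

lemma commute_Wy_Wy (a b : E) : Commute (Wy K a) (Wy K b) := by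
  show _ = _
  apply LinearMap.ext; intro p
  simpa [Wy, Module.End.mul_apply] using pderiv_pderiv_comm (K := K) a b p

lemma commute_Wy_Wx {a b : E} (h : a ≠ b) : Commute (Wy K a) (Wx K b) := by
  show _ = _
  apply LinearMap.ext; intro p
  simp [Wy, Wx, Module.End.mul_apply, pderiv_mul, pderiv_X_of_ne (Ne.symm h)]

/-- `z_e^{(p)}` -/
noncomputable def Wz (K : Type*) [Field K] {E : Type*} (e : E) (p : ℤ) :
    Module.End K (MvPolynomial E K) :=
  if 0 ≤ p then Wx K e ^ p.toNat else Wy K e ^ (-p).toNat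

lemma commute_Wz {a b : E} (h : a ≠ b) (p q : ℤ) :
    Commute (Wz K a p) (Wz K b q) := by
  unfold Wz
  split_ifs <;>
    exact Commute.pow_pow (by
      first
        | exact commute_Wx_Wx a b
        | exact commute_Wy_Wy a b
        | exact commute_Wy_Wx h
        | exact (commute_Wy_Wx h.symm).symm) _ _

/-- `z^k` for `k : E → ℤ` -/
noncomputable def Zpow (K : Type*) [Field K] {E : Type*} [Fintype E] [DecidableEq E]
    (k : E → ℤ) : Module.End K (MvPolynomial E K) :=
  Finset.univ.noncommProd (fun e => Wz K e (k e))
    (fun a _ b _ hab => commute_Wz hab _ _)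

lemma commute_aeval_aeval {A : Type*} [Ring A] [Algebra K A] {a b : A} (h : Commute a b)
    (p q : Polynomial K) : Commute (Polynomial.aeval a p) (Polynomial.aeval b q) := by
  rw [Polynomial.aeval_eq_sum_range, Polynomial.aeval_eq_sum_range]
  apply Commute.sum_left
  intro i _
  apply Commute.sum_right
  intro j _
  exact ((h.pow_pow i j).smul_left _).smul_right _

lemma commute_Wu (a b : E) : Commute (Wu K a) (Wu K b) := by
  rcases eq_or_ne a b with rfl | h
  · rfl
  · exact Commute.mul_left
      ((commute_Wy_Wy a b).mul_right (commute_Wy_Wx h))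
      (((commute_Wy_Wx h.symm).symm).mul_right (commute_Wx_Wx a b))

/-- The defining property of the incidence matrix of a multiquiver: every row has
at most one positive and at most one negative entry. -/
def CondM {V E : Type*} (γ : E → V → ℤ) : Prop :=
  ∀ e : E, (∀ v w : V, 0 < γ e v → 0 < γ e w → v = w) ∧
    (∀ v w : V, γ e v < 0 → γ e w < 0 → v = w)


lemma Wz_add (e : E) {a b : ℤ} (hab : 0 ≤ a * b) :
    Wz K e a * Wz K e b = Wz K e (a + b) := by
  rcases le_or_gt 0 a with ha | ha
  · rcases le_or_gt 0 b with hb | hb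
    · rw [Wz, Wz, Wz, if_pos ha, if_pos hb, if_pos (add_nonneg ha hb), Int.toNat_add ha hb,
        pow_add]
    · have : a = 0 := by nlinarith
      subst this
      simp [Wz]
  · rcases le_or_gt 0 b with hb | hb
    · have : b = 0 := by nlinarith
      subst this
      simp [Wz]
    · rw [Wz, Wz, Wz, if_neg (not_le.mpr ha), if_neg (not_le.mpr hb),
        if_neg (not_le.mpr (add_neg ha hb))]
      rw [show -(a + b) = -a + -b by ring, Int.toNat_add (by omega) (by omega), pow_add]

/-- If `g, h : V → ℤ` satisfy `g i · h i ≥ 0` for all `i` and `g i · h j ≤ 0`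
for `i ≠ j`, then `z^{γᵀg} · z^{γᵀh} = z^{γᵀ(g+h)}` in the Weyl algebra.
(Consequently `A_E(K)_{γᵀg} · A_E(K)_{γᵀh} = A_E(K)_{γᵀ(g+h)}` for the
`ℤE`-grading of the Weyl algebra.) -/
theorem zpow_gammaT_mul {K V E : Type*} [Field K] [CharZero K]
    [Fintype E] [DecidableEq E] [Fintype V]
    (γ : E → V → ℤ) (hM : CondM γ) (g h : V → ℤ)
    (hgh : ∀ i : V, 0 ≤ g i * h i)
    (hgh' : ∀ i j : V, i ≠ j → g i * h j ≤ 0) :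
    Zpow K (fun e => ∑ v : V, γ e v * g v) * Zpow K (fun e => ∑ v : V, γ e v * h v) =
      Zpow K (fun e => ∑ v : V, γ e v * (g v + h v)) := by
  have key : ∀ e : E, 0 ≤ (∑ v : V, γ e v * g v) * (∑ v : V, γ e v * h v) := by
    intro e
    rw [Finset.sum_mul_sum]
    apply Finset.sum_nonneg; intro v _
    apply Finset.sum_nonneg; intro w _
    rcases eq_or_ne v w with rfl | hvw
    · have : γ e v * g v * (γ e v * h v) = (γ e v) ^ 2 * (g v * h v) := by ring
      rw [this]
      exact mul_nonneg (sq_nonneg _) (hgh v)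
    · have h1 : γ e v * γ e w ≤ 0 := by
        rcases lt_trichotomy (γ e v) 0 with hv | hv | hv
        · rcases lt_trichotomy (γ e w) 0 with hw | hw | hw
          · exact absurd ((hM e).2 v w hv hw) hvw
          · simp [hw]
          · exact mul_nonpos_of_nonpos_of_nonneg hv.le hw.le
        · simp [hv]
        · rcases lt_trichotomy (γ e w) 0 with hw | hw | hw
          · exact mul_nonpos_of_nonneg_of_nonpos hv.le hw.le
          · simp [hw]
          · exact absurd ((hM e).1 v w hv hw) hvw
      have h2 : g v * h w ≤ 0 := hgh' v w hvw
      have heq : γ e v * g v * (γ e w * h w) = (γ e v * γ e w) * (g v * h w) := by ring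
      rw [heq]
      nlinarith
  rw [Zpow, Zpow, Zpow]
  refine (Finset.noncommProd_mul_distrib _ _ _ _
      (fun a _ b _ hab => commute_Wz hab _ _)).symm.trans ?_
  exact Finset.noncommProd_congr rfl
    (fun e _ => by
      show Wz K e _ * Wz K e _ = Wz K e _
      rw [Wz_add e (key e)]
      congr 1
      rw [← Finset.sum_add_distrib]
      exact Finset.sum_congr rfl fun v _ => by ring) _
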